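/- Nonlinear stability of the constant steady state: assume r(h̄)X² < 4π² and let δ, C be as in the quadratic energy bounds (δ/2)‖u‖²_{H¹} ≤ E(h̄+u) − E(h̄) ≤ (C/2)‖u‖²_{H¹} for zero-mean ‖u‖_{H¹} ≤ δ. If h(·,t) is a curve in H¹(𝕋_X) with mean value h̄, with t ↦ E(h(·,t)) nonincreasing, ‖h(·,0) − h̄‖_{H¹} < √(δ³/(4C)), and ‖h(·,t) − h̄‖_{H¹} ≤ δ for all t ∈ [0,T], then ‖h(·,t) − h̄‖_{H¹} < δ/2 for all t ∈ [0,T]. -/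
import Mathlib


open Set

/-- Nonlinear stability of the constant steady state via the
dissipated energy and the two-sided quadratic bounds. Here V abstracts H¹(𝕋_X),
M is the mean-value functional, h̄ the constant steady state, and t ↦ h t an
energy-dissipating curve with mean h̄. -/
theorem nonlinear_stability_constant_state
    {V : Type*} [NormedAddCommGroup V]
    (E : V → ℝ) (M : V → ℝ) (hbar : V)
    (δ C T : ℝ) (hδ : δ ∈ Set.Ioo (0:ℝ) 1) (hC : 1 ≤ C) (hT : 0 ≤ T)
    (hbounds : ∀ u : V, M u = 0 → ‖u‖ ≤ δ →
      (δ / 2) * ‖u‖ ^ 2 ≤ E (hbar + u) - E hbar ∧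
      E (hbar + u) - E hbar ≤ (C / 2) * ‖u‖ ^ 2)
    (h : ℝ → V)
    (hmean : ∀ t, M (h t - hbar) = 0)
    (hdissip : ∀ s t, 0 ≤ s → s ≤ t → t ≤ T → E (h t) ≤ E (h s))
    (hinit : ‖h 0 - hbar‖ < Real.sqrt (δ ^ 3 / (4 * C)))
    (hstay : ∀ t ∈ Set.Icc (0:ℝ) T, ‖h t - hbar‖ ≤ δ) :
    ∀ t ∈ Set.Icc (0:ℝ) T, ‖h t - hbar‖ < δ / 2 := by
  obtain ⟨hδ0, hδ1⟩ := hδ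
  have hC0 : (0:ℝ) < C := lt_of_lt_of_le one_pos hC
  intro t ht
  obtain ⟨ht0, htT⟩ := ht
  have h0mem : (0:ℝ) ∈ Set.Icc (0:ℝ) T := ⟨le_refl 0, hT⟩
  have h0 := hstay 0 h0mem
  have hstayt := hstay t ⟨ht0, htT⟩
  have hid : ∀ s, hbar + (h s - hbar) = h s := fun s => by abel
  have hb0 := (hbounds (h 0 - hbar) (hmean 0) h0).2
  have hbt := (hbounds (h t - hbar) (hmean t) hstayt).1
  rw [hid] at hb0 hbt
  have hE := hdissip 0 t le_rfl ht0 htT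
  -- ‖h 0 - hbar‖^2 < δ^3/(4C)
  have harg : (0:ℝ) ≤ δ ^ 3 / (4 * C) := by positivity
  have hsq : ‖h 0 - hbar‖ ^ 2 < δ ^ 3 / (4 * C) := by
    have := Real.sq_sqrt harg
    calc ‖h 0 - hbar‖ ^ 2 < Real.sqrt (δ ^ 3 / (4 * C)) ^ 2 := by
          apply pow_lt_pow_left₀ hinit (norm_nonneg _) (by norm_num)
      _ = δ ^ 3 / (4 * C) := this
  have key : (δ / 2) * ‖h t - hbar‖ ^ 2 < δ ^ 3 / 8 := by
    calc (δ / 2) * ‖h t - hbar‖ ^ 2 ≤ E (h t) - E hbar := hbt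
      _ ≤ E (h 0) - E hbar := by linarith
      _ ≤ (C / 2) * ‖h 0 - hbar‖ ^ 2 := hb0
      _ < (C / 2) * (δ ^ 3 / (4 * C)) := by
          apply mul_lt_mul_of_pos_left hsq (by positivity)
      _ = δ ^ 3 / 8 := by field_simp; ring
  have h2 : ‖h t - hbar‖ ^ 2 < (δ / 2) ^ 2 := by
    have : (δ / 2) * ‖h t - hbar‖ ^ 2 < (δ / 2) * (δ / 2) ^ 2 := by
      calc (δ / 2) * ‖h t - hbar‖ ^ 2 < δ ^ 3 / 8 := key
        _ = (δ / 2) * (δ / 2) ^ 2 := by ring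
    exact lt_of_mul_lt_mul_left this (by positivity)
  exact lt_of_pow_lt_pow_left₀ 2 (by positivity) h2
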